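/- For all z, w ∈ ℂ: ∫_ℝ A(z,u) · conj(A(w,u)) du = √π · e^{z·conj(w)}, where A(z,u) = exp(−u²/2 + √2·u·z − z²/2). In particular, for every z ∈ ℂ the function u ↦ A(z,u) is square-integrable on ℝ with ∫_ℝ |A(z,u)|² du = √π · e^{|z|²}. -/

import Mathlib

open MeasureTheory Complex

/-- The Bargmann kernel `A(z,u) = exp(-u²/2 + √2 u z - z²/2)`. -/
noncomputable def bargmannKernel (z : ℂ) (u : ℝ) : ℂ :=
  Complex.exp (-(u : ℂ) ^ 2 / 2 + (Real.sqrt 2 : ℂ) * (u : ℂ) * z - z ^ 2 / 2)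

lemma bargmann_prod (z w : ℂ) (u : ℝ) :
    bargmannKernel z u * (starRingEnd ℂ) (bargmannKernel w u) =
      Complex.exp ((-1 : ℂ) * (u : ℂ) ^ 2 + ((Real.sqrt 2 : ℂ) * (z + (starRingEnd ℂ) w)) * u
        + (-(z ^ 2) / 2 - ((starRingEnd ℂ) w) ^ 2 / 2)) := by
  rw [bargmannKernel, bargmannKernel, ← Complex.exp_conj, ← Complex.exp_add]
  congr 1
  simp only [map_add, map_sub, map_div₀, map_neg, map_pow, map_mul, Complex.conj_ofReal,
    map_ofNat]
  ring

lemma bargmann_integral (z w : ℂ) :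
    (∫ u : ℝ, bargmannKernel z u * (starRingEnd ℂ) (bargmannKernel w u)) =
      (Real.sqrt Real.pi : ℂ) * Complex.exp (z * (starRingEnd ℂ) w) := by
  simp_rw [bargmann_prod]
  rw [integral_cexp_quadratic (by norm_num : ((-1 : ℂ)).re < 0)]
  have h1 : ((Real.pi : ℂ) / -(-1)) ^ (1 / 2 : ℂ) = (Real.sqrt Real.pi : ℂ) := by
    rw [neg_neg, div_one, Real.sqrt_eq_rpow, Complex.ofReal_cpow Real.pi_nonneg]
    norm_num
  rw [h1]
  congr 1
  have h2 : ((Real.sqrt 2 : ℂ)) ^ 2 = 2 := by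
    rw [← Complex.ofReal_pow, Real.sq_sqrt (by norm_num)]
    norm_num
  field_simp
  ring_nf
  rw [h2]
  ring

lemma bargmann_integrable (z w : ℂ) :
    Integrable (fun u : ℝ => bargmannKernel z u * (starRingEnd ℂ) (bargmannKernel w u)) := by
  simp_rw [bargmann_prod]
  exact integrable_cexp_quadratic' (by norm_num) _ _

/-- `∫_ℝ A(z,u) conj(A(w,u)) du = √π e^{z conj(w)}`; in particular
`u ↦ A(z,u)` is square-integrable with `∫_ℝ |A(z,u)|² du = √π e^{|z|²}`. -/
theorem bargmannKernel_inner (z w : ℂ) :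
    ((∫ u : ℝ, bargmannKernel z u * (starRingEnd ℂ) (bargmannKernel w u)) =
      (Real.sqrt Real.pi : ℂ) * Complex.exp (z * (starRingEnd ℂ) w)) ∧
    Integrable (fun u : ℝ => ‖bargmannKernel z u‖ ^ 2) ∧
    ((∫ u : ℝ, ‖bargmannKernel z u‖ ^ 2) =
      Real.sqrt Real.pi * Real.exp (‖z‖ ^ 2)) := by
  refine ⟨bargmann_integral z w, ?_, ?_⟩
  · have := (bargmann_integrable z z).norm
    simpa [Complex.mul_conj', Complex.mul_conj, ← Complex.normSq_eq_norm_sq,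
      Complex.normSq_eq_norm_sq] using this
  · have h := bargmann_integral z z
    have hmc : ∀ u : ℝ, bargmannKernel z u * (starRingEnd ℂ) (bargmannKernel z u)
        = ((‖bargmannKernel z u‖ ^ 2 : ℝ) : ℂ) := by
      intro u
      rw [Complex.mul_conj]
      simp [Complex.normSq_eq_norm_sq]
    simp_rw [hmc] at h
    rw [show (∫ u : ℝ, ((‖bargmannKernel z u‖ ^ 2 : ℝ) : ℂ)) =
        ((∫ u : ℝ, ‖bargmannKernel z u‖ ^ 2 : ℝ) : ℂ) from integral_ofReal] at h
    have hz : z * (starRingEnd ℂ) z = ((‖z‖ ^ 2 : ℝ) : ℂ) := by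
      rw [Complex.mul_conj]; simp [Complex.normSq_eq_norm_sq]
    rw [hz, ← Complex.ofReal_exp, ← Complex.ofReal_mul] at h
    exact_mod_cast h
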